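/- The only minimal zero-sum multisets of length 5 over {-3,…,3} are, up to negation, {3, 3, -2, -2, -2}. -/

import Mathlib

private lemma sl {l₁ l₂ : List ℤ} (h : List.Sublist l₁ l₂) : (↑l₁ : Multiset ℤ) ≤ ↑l₂ :=
  Multiset.coe_le.mpr h.subperm

theorem minimal_zss_length_five (S : Multiset ℤ) :
    ((∀ x ∈ S, -3 ≤ x ∧ x ≤ 3) ∧ S.sum = 0 ∧ S.card = 5 ∧
      (∀ T : Multiset ℤ, T ≤ S → T ≠ 0 → T ≠ S → T.sum ≠ 0)) ↔
    (S = {3, 3, -2, -2, -2} ∨ S = {-3, -3, 2, 2, 2}) := by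
  constructor
  · rintro ⟨hbound, hsum, hcard, hmin⟩
    have hS : ((S.sort (· ≤ ·) : List ℤ) : Multiset ℤ) = S := Multiset.sort_eq _ _
    have hsorted : (S.sort (· ≤ ·)).Pairwise (· ≤ ·) := Multiset.pairwise_sort _ _
    set l := S.sort (· ≤ ·) with hl
    clear_value l
    subst hS
    rcases l with _ | ⟨a, _ | ⟨b, _ | ⟨c, _ | ⟨d, _ | ⟨e, _ | ⟨f, l⟩⟩⟩⟩⟩⟩ <;>
      simp only [Multiset.coe_card, List.length] at hcard <;> try omega
    simp only [List.pairwise_cons, List.mem_cons, List.not_mem_nil, or_false,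
      List.mem_singleton, forall_eq_or_imp, forall_eq, List.Pairwise.nil, and_true] at hsorted
    obtain ⟨⟨hab, hac, had, hae⟩, ⟨hbc, hbd, hbe⟩, ⟨hcd, hce⟩, hde⟩ := hsorted
    have ha := hbound a (by simp)
    have hb := hbound b (by simp)
    have hcc := hbound c (by simp)
    have hd := hbound d (by simp)
    have he := hbound e (by simp)
    have h1 : ((↑([a] : List ℤ)) : Multiset ℤ).sum ≠ 0 := hmin _ (sl (((((List.Sublist.slnil.cons e).cons d).cons c).cons b).cons₂ a)) (by simp) (by intro hEq; apply_fun Multiset.card at hEq; simp at hEq)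
    have h2 : ((↑([b] : List ℤ)) : Multiset ℤ).sum ≠ 0 := hmin _ (sl (((((List.Sublist.slnil.cons e).cons d).cons c).cons₂ b).cons a)) (by simp) (by intro hEq; apply_fun Multiset.card at hEq; simp at hEq)
    have h3 : ((↑([c] : List ℤ)) : Multiset ℤ).sum ≠ 0 := hmin _ (sl (((((List.Sublist.slnil.cons e).cons d).cons₂ c).cons b).cons a)) (by simp) (by intro hEq; apply_fun Multiset.card at hEq; simp at hEq)
    have h4 : ((↑([d] : List ℤ)) : Multiset ℤ).sum ≠ 0 := hmin _ (sl (((((List.Sublist.slnil.cons e).cons₂ d).cons c).cons b).cons a)) (by simp) (by intro hEq; apply_fun Multiset.card at hEq; simp at hEq)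
    have h5 : ((↑([e] : List ℤ)) : Multiset ℤ).sum ≠ 0 := hmin _ (sl (((((List.Sublist.slnil.cons₂ e).cons d).cons c).cons b).cons a)) (by simp) (by intro hEq; apply_fun Multiset.card at hEq; simp at hEq)
    have h6 : ((↑([a, b] : List ℤ)) : Multiset ℤ).sum ≠ 0 := hmin _ (sl (((((List.Sublist.slnil.cons e).cons d).cons c).cons₂ b).cons₂ a)) (by simp) (by intro hEq; apply_fun Multiset.card at hEq; simp at hEq)
    have h7 : ((↑([a, c] : List ℤ)) : Multiset ℤ).sum ≠ 0 := hmin _ (sl (((((List.Sublist.slnil.cons e).cons d).cons₂ c).cons b).cons₂ a)) (by simp) (by intro hEq; apply_fun Multiset.card at hEq; simp at hEq)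
    have h8 : ((↑([a, d] : List ℤ)) : Multiset ℤ).sum ≠ 0 := hmin _ (sl (((((List.Sublist.slnil.cons e).cons₂ d).cons c).cons b).cons₂ a)) (by simp) (by intro hEq; apply_fun Multiset.card at hEq; simp at hEq)
    have h9 : ((↑([a, e] : List ℤ)) : Multiset ℤ).sum ≠ 0 := hmin _ (sl (((((List.Sublist.slnil.cons₂ e).cons d).cons c).cons b).cons₂ a)) (by simp) (by intro hEq; apply_fun Multiset.card at hEq; simp at hEq)
    have h10 : ((↑([b, c] : List ℤ)) : Multiset ℤ).sum ≠ 0 := hmin _ (sl (((((List.Sublist.slnil.cons e).cons d).cons₂ c).cons₂ b).cons a)) (by simp) (by intro hEq; apply_fun Multiset.card at hEq; simp at hEq)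
    have h11 : ((↑([b, d] : List ℤ)) : Multiset ℤ).sum ≠ 0 := hmin _ (sl (((((List.Sublist.slnil.cons e).cons₂ d).cons c).cons₂ b).cons a)) (by simp) (by intro hEq; apply_fun Multiset.card at hEq; simp at hEq)
    have h12 : ((↑([b, e] : List ℤ)) : Multiset ℤ).sum ≠ 0 := hmin _ (sl (((((List.Sublist.slnil.cons₂ e).cons d).cons c).cons₂ b).cons a)) (by simp) (by intro hEq; apply_fun Multiset.card at hEq; simp at hEq)
    have h13 : ((↑([c, d] : List ℤ)) : Multiset ℤ).sum ≠ 0 := hmin _ (sl (((((List.Sublist.slnil.cons e).cons₂ d).cons₂ c).cons b).cons a)) (by simp) (by intro hEq; apply_fun Multiset.card at hEq; simp at hEq)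
    have h14 : ((↑([c, e] : List ℤ)) : Multiset ℤ).sum ≠ 0 := hmin _ (sl (((((List.Sublist.slnil.cons₂ e).cons d).cons₂ c).cons b).cons a)) (by simp) (by intro hEq; apply_fun Multiset.card at hEq; simp at hEq)
    have h15 : ((↑([d, e] : List ℤ)) : Multiset ℤ).sum ≠ 0 := hmin _ (sl (((((List.Sublist.slnil.cons₂ e).cons₂ d).cons c).cons b).cons a)) (by simp) (by intro hEq; apply_fun Multiset.card at hEq; simp at hEq)
    have h16 : ((↑([a, b, c] : List ℤ)) : Multiset ℤ).sum ≠ 0 := hmin _ (sl (((((List.Sublist.slnil.cons e).cons d).cons₂ c).cons₂ b).cons₂ a)) (by simp) (by intro hEq; apply_fun Multiset.card at hEq; simp at hEq)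
    have h17 : ((↑([a, b, d] : List ℤ)) : Multiset ℤ).sum ≠ 0 := hmin _ (sl (((((List.Sublist.slnil.cons e).cons₂ d).cons c).cons₂ b).cons₂ a)) (by simp) (by intro hEq; apply_fun Multiset.card at hEq; simp at hEq)
    have h18 : ((↑([a, b, e] : List ℤ)) : Multiset ℤ).sum ≠ 0 := hmin _ (sl (((((List.Sublist.slnil.cons₂ e).cons d).cons c).cons₂ b).cons₂ a)) (by simp) (by intro hEq; apply_fun Multiset.card at hEq; simp at hEq)
    have h19 : ((↑([a, c, d] : List ℤ)) : Multiset ℤ).sum ≠ 0 := hmin _ (sl (((((List.Sublist.slnil.cons e).cons₂ d).cons₂ c).cons b).cons₂ a)) (by simp) (by intro hEq; apply_fun Multiset.card at hEq; simp at hEq)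
    have h20 : ((↑([a, c, e] : List ℤ)) : Multiset ℤ).sum ≠ 0 := hmin _ (sl (((((List.Sublist.slnil.cons₂ e).cons d).cons₂ c).cons b).cons₂ a)) (by simp) (by intro hEq; apply_fun Multiset.card at hEq; simp at hEq)
    have h21 : ((↑([a, d, e] : List ℤ)) : Multiset ℤ).sum ≠ 0 := hmin _ (sl (((((List.Sublist.slnil.cons₂ e).cons₂ d).cons c).cons b).cons₂ a)) (by simp) (by intro hEq; apply_fun Multiset.card at hEq; simp at hEq)
    have h22 : ((↑([b, c, d] : List ℤ)) : Multiset ℤ).sum ≠ 0 := hmin _ (sl (((((List.Sublist.slnil.cons e).cons₂ d).cons₂ c).cons₂ b).cons a)) (by simp) (by intro hEq; apply_fun Multiset.card at hEq; simp at hEq)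
    have h23 : ((↑([b, c, e] : List ℤ)) : Multiset ℤ).sum ≠ 0 := hmin _ (sl (((((List.Sublist.slnil.cons₂ e).cons d).cons₂ c).cons₂ b).cons a)) (by simp) (by intro hEq; apply_fun Multiset.card at hEq; simp at hEq)
    have h24 : ((↑([b, d, e] : List ℤ)) : Multiset ℤ).sum ≠ 0 := hmin _ (sl (((((List.Sublist.slnil.cons₂ e).cons₂ d).cons c).cons₂ b).cons a)) (by simp) (by intro hEq; apply_fun Multiset.card at hEq; simp at hEq)
    have h25 : ((↑([c, d, e] : List ℤ)) : Multiset ℤ).sum ≠ 0 := hmin _ (sl (((((List.Sublist.slnil.cons₂ e).cons₂ d).cons₂ c).cons b).cons a)) (by simp) (by intro hEq; apply_fun Multiset.card at hEq; simp at hEq)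
    have h26 : ((↑([a, b, c, d] : List ℤ)) : Multiset ℤ).sum ≠ 0 := hmin _ (sl (((((List.Sublist.slnil.cons e).cons₂ d).cons₂ c).cons₂ b).cons₂ a)) (by simp) (by intro hEq; apply_fun Multiset.card at hEq; simp at hEq)
    have h27 : ((↑([a, b, c, e] : List ℤ)) : Multiset ℤ).sum ≠ 0 := hmin _ (sl (((((List.Sublist.slnil.cons₂ e).cons d).cons₂ c).cons₂ b).cons₂ a)) (by simp) (by intro hEq; apply_fun Multiset.card at hEq; simp at hEq)
    have h28 : ((↑([a, b, d, e] : List ℤ)) : Multiset ℤ).sum ≠ 0 := hmin _ (sl (((((List.Sublist.slnil.cons₂ e).cons₂ d).cons c).cons₂ b).cons₂ a)) (by simp) (by intro hEq; apply_fun Multiset.card at hEq; simp at hEq)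
    have h29 : ((↑([a, c, d, e] : List ℤ)) : Multiset ℤ).sum ≠ 0 := hmin _ (sl (((((List.Sublist.slnil.cons₂ e).cons₂ d).cons₂ c).cons b).cons₂ a)) (by simp) (by intro hEq; apply_fun Multiset.card at hEq; simp at hEq)
    have h30 : ((↑([b, c, d, e] : List ℤ)) : Multiset ℤ).sum ≠ 0 := hmin _ (sl (((((List.Sublist.slnil.cons₂ e).cons₂ d).cons₂ c).cons₂ b).cons a)) (by simp) (by intro hEq; apply_fun Multiset.card at hEq; simp at hEq)
    simp only [Multiset.sum_coe, List.sum_cons, List.sum_nil, add_zero] at h1 h2 h3 h4 h5 h6 h7 h8 h9 h10 h11 h12 h13 h14 h15 h16 h17 h18 h19 h20 h21 h22 h23 h24 h25 h26 h27 h28 h29 h30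

    simp only [Multiset.sum_coe, List.sum_cons, List.sum_nil, add_zero] at hsum
    obtain ⟨ha1, ha2⟩ := ha
    obtain ⟨hb1, hb2⟩ := hb
    obtain ⟨hc1, hc2⟩ := hcc
    obtain ⟨hd1, hd2⟩ := hd
    obtain ⟨he1, he2⟩ := he
    clear hmin hbound hcard
    interval_cases a <;> interval_cases b <;> interval_cases c <;>
      interval_cases d <;> interval_cases e <;>
      first
      | (left; decide)
      | (right; decide)
      | (exfalso; omega)
  · have key : ∀ T ∈ (({3, 3, -2, -2, -2} : Multiset ℤ)).powerset,
        T ≠ 0 → T ≠ ({3, 3, -2, -2, -2} : Multiset ℤ) → T.sum ≠ 0 := by decide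
    have key2 : ∀ T ∈ (({-3, -3, 2, 2, 2} : Multiset ℤ)).powerset,
        T ≠ 0 → T ≠ ({-3, -3, 2, 2, 2} : Multiset ℤ) → T.sum ≠ 0 := by decide
    rintro (rfl | rfl)
    · refine ⟨by decide, by decide, by decide, fun T hT => key T (Multiset.mem_powerset.mpr hT)⟩
    · refine ⟨by decide, by decide, by decide, fun T hT => key2 T (Multiset.mem_powerset.mpr hT)⟩
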